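/- arXiv:2511.05815 — 2 statements merged into one kernel-verified Lean document; each statement's English description precedes it below -/
import Mathlib

section
/- Tchebycheff scalarization (necessity direction): if x* ∈ X is weakly Pareto optimal, then there exists a weight vector λ on the simplex (λ_i ≥ 0, ∑ λ_i = 1) such that x* minimizes l_tch(x | λ) = max_i λ_i (f_i(x) − z_i) over X, where z_i < inf_{x∈X} f_i(x). In particular one may choose λ_i proportional to 1/(f_i(x*) − z_i). -/
/-- Necessity direction of the Tchebycheff scalarization theorem: every weakly Pareto optimal
point minimizes the Tchebycheff scalarization for some weight vector on the simplex. -/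
theorem weaklyParetoOptimal_tchebycheff_minimizer {α : Type*} {m : ℕ} [NeZero m]
    (f : α → Fin m → ℝ) (X : Set α) (hX : X.Nonempty)
    (z : Fin m → ℝ) (hz : ∀ x ∈ X, ∀ i, z i < f x i)
    (xstar : α) (hxstar : xstar ∈ X)
    (hweak : ¬ ∃ x ∈ X, ∀ i, f x i < f xstar i) :
    ∃ lam : Fin m → ℝ, (∀ i, 0 ≤ lam i) ∧ (∑ i, lam i = 1) ∧
      ∀ x ∈ X, (⨆ i, lam i * (f xstar i - z i)) ≤ ⨆ i, lam i * (f x i - z i) := by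
  set c : Fin m → ℝ := fun i => f xstar i - z i with hc
  have hcpos : ∀ i, 0 < c i := fun i => sub_pos.mpr (hz xstar hxstar i)
  set S : ℝ := ∑ i, (c i)⁻¹ with hS
  have hSpos : 0 < S := Finset.sum_pos (fun i _ => inv_pos.mpr (hcpos i)) Finset.univ_nonempty
  set lam : Fin m → ℝ := fun i => (c i)⁻¹ / S with hlam
  have hlamc : ∀ i, lam i * c i = 1 / S := by
    intro i
    field_simp [hlam]
    show (c i)⁻¹ / S * c i * S = 1
    rw [div_mul_eq_mul_div, div_mul_cancel₀ _ hSpos.ne', inv_mul_cancel₀ (hcpos i).ne']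
  refine ⟨lam, fun i => le_of_lt (div_pos (inv_pos.mpr (hcpos i)) hSpos), ?_, ?_⟩
  · simp only [hlam]
    rw [← Finset.sum_div, ← hS, div_self (ne_of_gt hSpos)]
  · intro x hx
    push_neg at hweak
    obtain ⟨i, hi⟩ := hweak x hx
    have hsup1 : (⨆ i, lam i * (f xstar i - z i)) = 1 / S := by
      have : ∀ j, lam j * (f xstar j - z j) = 1 / S := fun j => hlamc j
      simp only [this]
      exact ciSup_const
    rw [hsup1]
    calc 1 / S = lam i * c i := (hlamc i).symm
      _ ≤ lam i * (f x i - z i) := by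
          apply mul_le_mul_of_nonneg_left _ (le_of_lt (div_pos (inv_pos.mpr (hcpos i)) hSpos))
          simp only [hc]; linarith
      _ ≤ ⨆ j, lam j * (f x j - z j) :=
          le_ciSup (f := fun j => lam j * (f x j - z j)) (Set.Finite.bddAbove (Set.finite_range _)) i
end

section
/- If x* minimizes the smooth Tchebycheff scalarization l_stch(x) = ν log(∑_i exp(λ_i(f_i(x) − z_i)/ν)) over X for some ν > 0 and strictly positive weights λ_i > 0, then x* is weakly Pareto optimal. -/
/-- A minimizer of the smooth Tchebycheff scalarization with strictly positive weights is
weakly Pareto optimal. -/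
theorem stch_minimizer_weaklyParetoOptimal {α : Type*} {m : ℕ} [NeZero m]
    (f : α → Fin m → ℝ) (X : Set α)
    (lam : Fin m → ℝ) (hpos : ∀ i, 0 < lam i)
    (z : Fin m → ℝ) (ν : ℝ) (hν : 0 < ν)
    (xstar : α) (hxstar : xstar ∈ X)
    (hmin : ∀ x ∈ X,
      ν * Real.log (∑ i, Real.exp (lam i * (f xstar i - z i) / ν)) ≤
      ν * Real.log (∑ i, Real.exp (lam i * (f x i - z i) / ν))) :
    ¬ ∃ x ∈ X, ∀ i, f x i < f xstar i := by
  rintro ⟨x, hxX, hlt⟩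
  have hsum : (∑ i, Real.exp (lam i * (f x i - z i) / ν)) <
      ∑ i, Real.exp (lam i * (f xstar i - z i) / ν) := by
    apply Finset.sum_lt_sum_of_nonempty Finset.univ_nonempty
    intro i _
    apply Real.exp_lt_exp.mpr
    exact div_lt_div_of_pos_right (by nlinarith [hpos i, hlt i]) hν
  have hpossum : 0 < ∑ i, Real.exp (lam i * (f x i - z i) / ν) :=
    Finset.sum_pos (fun i _ => Real.exp_pos _) Finset.univ_nonempty
  have := hmin x hxX
  have hlog := Real.log_lt_log hpossum hsum
  nlinarith
end
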